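/- Let N ≥ 1 and for 1 ≤ i < j ≤ N + 1 write b(i, j) = 3^{i−1} + 3^{i} + ⋯ + 3^{j−2} (the block sums of the sequence A = (1, 3, 3², …, 3^{N−1})). If indices 1 ≤ i₁ < j₁ ≤ N+1, 1 ≤ i₂ < j₂ ≤ N+1, 1 ≤ i₃ < j₃ ≤ N+1 satisfy b(i₁, j₁) + b(i₂, j₂) = b(i₃, j₃) and i₁ ≤ i₂, then i₁ = i₃, j₁ = i₂, and j₂ = j₃. -/

import Mathlib

private lemma pow3_step {x y : ℕ} (h : x < y) : (3:ℤ)^x * 3 ≤ 3^y := by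
  calc (3:ℤ)^x * 3 = 3^(x+1) := (pow_succ 3 x).symm
  _ ≤ 3^y := pow_le_pow_right₀ (by norm_num) h

private lemma pow3_mono {x y : ℕ} (h : x ≤ y) : (3:ℤ)^x ≤ 3^y :=
  pow_le_pow_right₀ (by norm_num) h

private lemma pow3_lt_rev {x y : ℕ} (h : (3:ℤ)^x < 3^y) : x < y := by
  by_contra hc
  push_neg at hc
  exact absurd (pow3_mono hc) (not_le.mpr h)

private lemma pow3_pos (x : ℕ) : (0:ℤ) < 3^x := pow_pos (by norm_num) x

private lemma pow3_inj {x y : ℕ} (h : (3:ℤ)^x = 3^y) : x = y := by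
  rcases lt_trichotomy x y with hl | he | hl
  · exact absurd h (ne_of_lt (by have := pow3_step hl; nlinarith [pow3_pos x]))
  · exact he
  · exact absurd h.symm (ne_of_lt (by have := pow3_step hl; nlinarith [pow3_pos y]))

private lemma pair_lemma (a b c e : ℕ) (hab : a < b) (hac : a ≤ c)
    (h : (3:ℤ)^b + 3^e = 3^a + 3^c) : b = c ∧ a = e := by
  have pac := pow3_mono hac
  have pab := pow3_step hab
  -- b ≤ c
  have hbc : b ≤ c := by
    have hlt : (3:ℤ)^b < 3^(c+1) := by
      rw [pow_succ]; nlinarith [pow3_pos e, pow3_pos a]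
    have := pow3_lt_rev hlt; omega
  -- e < c
  have hec : e < c := by
    apply pow3_lt_rev
    nlinarith [pow3_pos a]
  -- c ≤ b
  have hcb : b = c := by
    rcases lt_or_eq_of_le hbc with hlt | he
    · exfalso
      have h1 := pow3_step hlt
      have h2 := pow3_step hec
      nlinarith [pow3_pos a, pow3_pos c]
    · exact he
  refine ⟨hcb, pow3_inj ?_⟩
  subst hcb
  linarith

private lemma core_lemma (a b c d e f : ℕ) (hab : a < b) (hcd : c < d) (hef : e < f)
    (hac : a ≤ c) (h : (3:ℤ)^b + 3^d + 3^e = 3^a + 3^c + 3^f) :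
    a = e ∧ b = c ∧ d = f := by
  have pab := pow3_step hab
  have pcd := pow3_step hcd
  have pef := pow3_step hef
  have pac := pow3_mono hac
  -- b ≤ f
  have hbf : b ≤ f := by
    have hlt : (3:ℤ)^b < 3^(f+1) := by
      rw [pow_succ]; nlinarith [pow3_pos e, pow3_pos a, pow3_pos c, pow3_pos d]
    have := pow3_lt_rev hlt; omega
  -- d ≤ f
  have hdf : d ≤ f := by
    have hlt : (3:ℤ)^d < 3^(f+1) := by
      rw [pow_succ]; nlinarith [pow3_pos e, pow3_pos a, pow3_pos c, pow3_pos b]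
    have := pow3_lt_rev hlt; omega
  rcases le_or_gt b d with hbd | hdb
  · -- f ≤ d, hence f = d
    have hfd : f ≤ d := by
      have hlt : (3:ℤ)^f < 3^(d+1) := by
        rw [pow_succ]
        nlinarith [pow3_pos a, pow3_pos c, pow3_mono hbd]
      have := pow3_lt_rev hlt; omega
    have hfd' : f = d := le_antisymm hfd hdf
    have hpair : (3:ℤ)^b + 3^e = 3^a + 3^c := by
      have : (3:ℤ)^f = 3^d := by rw [hfd']
      linarith
    obtain ⟨h1, h2⟩ := pair_lemma a b c e hab hac hpair
    exact ⟨h2, h1, hfd'.symm⟩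
  · -- d < b, so f = b, leading to contradiction
    exfalso
    have hfb : f ≤ b := by
      have hlt : (3:ℤ)^f < 3^(b+1) := by
        rw [pow_succ]
        nlinarith [pow3_pos a, pow3_pos c, pow3_mono hdb.le]
      have := pow3_lt_rev hlt; omega
    have hfb' : f = b := le_antisymm hfb hbf
    have hpair : (3:ℤ)^d + 3^e = 3^a + 3^c := by
      have : (3:ℤ)^f = 3^b := by rw [hfb']
      linarith
    -- but d > c ≥ a gives 3^d ≥ 3·3^c > 3^a + 3^c > 3^d, contradiction
    have : (3:ℤ)^d < 3^(c+1) := by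
      rw [pow_succ]; nlinarith [pow3_pos e, pow3_pos c]
    have := pow3_lt_rev this
    omega

private lemma two_mul_sum (i j : ℕ) (hi : 1 ≤ i) (hij : i ≤ j) :
    2 * ∑ k ∈ Finset.Ico i j, (3:ℤ)^(k-1) = 3^(j-1) - 3^(i-1) := by
  induction j, hij using Nat.le_induction with
  | base => simp
  | succ j hij ih =>
    rw [Finset.sum_Ico_succ_top hij, mul_add, ih]
    have h1 : j - 1 + 1 = j := by omega
    have h2 : (3:ℤ)^(j+1-1) = 3^(j-1) * 3 := by
      rw [← pow_succ]; congr 1; omega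
    rw [h2]; ring

/-- For the sequence `A = (1, 3, 3², …, 3^{N-1})`, with block sums
`b(i, j) = 3^{i-1} + ⋯ + 3^{j-2}` for `1 ≤ i < j ≤ N+1`: if
`b(i₁, j₁) + b(i₂, j₂) = b(i₃, j₃)` and `i₁ ≤ i₂`, then
`i₁ = i₃`, `j₁ = i₂`, and `j₂ = j₃`. -/
theorem powers_of_three_block_sum_relation (N : ℕ) (hN : 1 ≤ N)
    (i₁ j₁ i₂ j₂ i₃ j₃ : ℕ)
    (hi₁ : 1 ≤ i₁) (hij₁ : i₁ < j₁) (hj₁ : j₁ ≤ N + 1)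
    (hi₂ : 1 ≤ i₂) (hij₂ : i₂ < j₂) (hj₂ : j₂ ≤ N + 1)
    (hi₃ : 1 ≤ i₃) (hij₃ : i₃ < j₃) (hj₃ : j₃ ≤ N + 1)
    (hsum : (∑ k ∈ Finset.Ico i₁ j₁, (3 : ℤ) ^ (k - 1)) +
        (∑ k ∈ Finset.Ico i₂ j₂, (3 : ℤ) ^ (k - 1)) =
      ∑ k ∈ Finset.Ico i₃ j₃, (3 : ℤ) ^ (k - 1))
    (hle : i₁ ≤ i₂) :
    i₁ = i₃ ∧ j₁ = i₂ ∧ j₂ = j₃ := by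
  have h1 := two_mul_sum i₁ j₁ hi₁ hij₁.le
  have h2 := two_mul_sum i₂ j₂ hi₂ hij₂.le
  have h3 := two_mul_sum i₃ j₃ hi₃ hij₃.le
  have key : (3:ℤ)^(j₁-1) + 3^(j₂-1) + 3^(i₃-1)
      = 3^(i₁-1) + 3^(i₂-1) + 3^(j₃-1) := by linarith
  obtain ⟨e1, e2, e3⟩ := core_lemma (i₁-1) (j₁-1) (i₂-1) (j₂-1) (i₃-1) (j₃-1)
    (by omega) (by omega) (by omega) (by omega) key
  omega
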